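/- arXiv:cs/0612036 — 3 statements merged into one kernel-verified Lean document; each statement's English description precedes it below -/
import Mathlib

section
/- The optimal value of the problem: maximize k subject to k ≤ (α+β)√γ, k ≤ (β+γ)√α, k ≤ (γ+α)√β, and α+β+γ ≤ 2 over nonnegative reals α, β, γ, is k = √(32/27), attained at α = β = γ = 2/3. -/
open Real

lemma amgm3 {x y z : ℝ} (hx : 0 ≤ x) (hy : 0 ≤ y) (hz : 0 ≤ z) :
    x * y * z ≤ ((x + y + z) / 3) ^ 3 := by
  nlinarith [sq_nonneg (x - y), sq_nonneg (y - z), sq_nonneg (x - z),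
    sq_nonneg (x + y + z), mul_nonneg hx hy, mul_nonneg hy hz, mul_nonneg hx hz,
    sq_nonneg (x + y - 2*z), sq_nonneg (y + z - 2*x), sq_nonneg (x + z - 2*y)]

lemma ub {k α β γ : ℝ} (hα : 0 ≤ α) (hβ : 0 ≤ β) (hγ : 0 ≤ γ)
    (hs : α + β + γ ≤ 2) (h1 : k ≤ (α + β) * Real.sqrt γ)
    (h2 : k ≤ (β + γ) * Real.sqrt α) (h3 : k ≤ (γ + α) * Real.sqrt β) :
    k ≤ Real.sqrt (32 / 27) := by
  rcases le_or_gt k 0 with hk | hk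
  · exact hk.trans (Real.sqrt_nonneg _)
  set M := Real.sqrt (32 / 27) with hM
  have hM0 : 0 ≤ M := Real.sqrt_nonneg _
  have hM2 : M ^ 2 = 32 / 27 := Real.sq_sqrt (by norm_num)
  set a := Real.sqrt α with ha
  set b := Real.sqrt β with hb
  set c := Real.sqrt γ with hc
  have ha0 : 0 ≤ a := Real.sqrt_nonneg _
  have hb0 : 0 ≤ b := Real.sqrt_nonneg _
  have hc0 : 0 ≤ c := Real.sqrt_nonneg _
  have ha2 : a ^ 2 = α := Real.sq_sqrt hα
  have hb2 : b ^ 2 = β := Real.sq_sqrt hβ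
  have hc2 : c ^ 2 = γ := Real.sq_sqrt hγ
  -- k^3 ≤ product X
  set X := ((α + β) * c) * (((β + γ) * a) * ((γ + α) * b)) with hX
  have hkX : k ^ 3 ≤ X := by
    have h1' : 0 < (α + β) * c := lt_of_lt_of_le hk h1
    have h2' : 0 < (β + γ) * a := lt_of_lt_of_le hk h2
    have h3' : 0 < (γ + α) * b := lt_of_lt_of_le hk h3
    calc k ^ 3 = k * (k * k) := by ring
    _ ≤ ((α + β) * c) * (((β + γ) * a) * ((γ + α) * b)) := by
        apply mul_le_mul h1 _ (by positivity) h1'.le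
        exact mul_le_mul h2 h3 hk.le h2'.le
  -- bound X² by polynomial AM-GM
  have hXnn : 0 ≤ X := le_trans (by positivity) hkX
  have hs' : a ^ 2 + b ^ 2 + c ^ 2 ≤ 2 := by rw [ha2, hb2, hc2]; exact hs
  have hQ : (a^2 + b^2) * (b^2 + c^2) * (c^2 + a^2)
      ≤ ((2 * (a^2 + b^2 + c^2)) / 3) ^ 3 := by
    have := amgm3 (x := a^2 + b^2) (y := b^2 + c^2) (z := c^2 + a^2)
      (by positivity) (by positivity) (by positivity)
    calc (a^2 + b^2) * (b^2 + c^2) * (c^2 + a^2)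
        ≤ (((a^2+b^2) + (b^2+c^2) + (c^2+a^2)) / 3) ^ 3 := this
      _ = ((2 * (a^2 + b^2 + c^2)) / 3) ^ 3 := by ring
  have hR : a^2 * b^2 * c^2 ≤ ((a^2 + b^2 + c^2) / 3) ^ 3 :=
    amgm3 (by positivity) (by positivity) (by positivity)
  have hX2 : X ^ 2 ≤ (32 / 27) ^ 3 := by
    have hXeq : X ^ 2 = ((a^2 + b^2) * (b^2 + c^2) * (c^2 + a^2)) ^ 2
        * (a^2 * b^2 * c^2) := by
      rw [hX, ← ha2, ← hb2, ← hc2]; ring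
    rw [hXeq]
    set s := a^2 + b^2 + c^2 with hsdef
    have hs0 : 0 ≤ s := by positivity
    have hQ0 : 0 ≤ (a^2 + b^2) * (b^2 + c^2) * (c^2 + a^2) := by positivity
    calc ((a^2 + b^2) * (b^2 + c^2) * (c^2 + a^2)) ^ 2 * (a^2 * b^2 * c^2)
        ≤ ((2 * s / 3) ^ 3) ^ 2 * ((s / 3) ^ 3) := by
          apply mul_le_mul _ hR (by positivity) (by positivity)
          exact pow_le_pow_left₀ hQ0 hQ 2
      _ = 64 / 19683 * s ^ 9 := by ring
      _ ≤ 64 / 19683 * 2 ^ 9 :=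
          mul_le_mul_of_nonneg_left (pow_le_pow_left₀ hs0 hs' 9) (by norm_num)
      _ = (32 / 27) ^ 3 := by norm_num
  -- conclude
  have hXM : X ≤ M ^ 3 := by
    have h : X ^ 2 ≤ (M ^ 3) ^ 2 := by
      rw [show (M ^ 3) ^ 2 = (M ^ 2) ^ 3 by ring, hM2]; exact hX2
    exact le_of_pow_le_pow_left₀ (by norm_num) (pow_nonneg hM0 3) h
  have : k ^ 3 ≤ M ^ 3 := hkX.trans hXM
  exact le_of_pow_le_pow_left₀ (by norm_num) hM0 this

lemma eq_sqrt : Real.sqrt (32 / 27) = (2 / 3 + 2 / 3) * Real.sqrt (2 / 3) := by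
  rw [show (32 / 27 : ℝ) = (4/3)^2 * (2/3) by norm_num, Real.sqrt_mul (by positivity),
    Real.sqrt_sq (by norm_num)]
  norm_num

/-- The optimal value of: maximize `k` subject to `k ≤ (α+β)√γ`,
`k ≤ (β+γ)√α`, `k ≤ (γ+α)√β`, `α+β+γ ≤ 2` over nonnegative reals `α β γ`, is
`k = √(32/27)`, attained at `α = β = γ = 2/3`. -/
theorem stmt_2 :
    IsGreatest {k : ℝ | ∃ α β γ : ℝ, 0 ≤ α ∧ 0 ≤ β ∧ 0 ≤ γ ∧ α + β + γ ≤ 2 ∧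
        k ≤ (α + β) * Real.sqrt γ ∧ k ≤ (β + γ) * Real.sqrt α ∧ k ≤ (γ + α) * Real.sqrt β}
      (Real.sqrt (32 / 27)) ∧
    Real.sqrt (32 / 27) = (2 / 3 + 2 / 3) * Real.sqrt (2 / 3) := by
  refine ⟨⟨⟨2/3, 2/3, 2/3, by norm_num, by norm_num, by norm_num, by norm_num,
      le_of_eq eq_sqrt, le_of_eq eq_sqrt, le_of_eq eq_sqrt⟩, ?_⟩, eq_sqrt⟩
  rintro k ⟨α, β, γ, hα, hβ, hγ, hs, h1, h2, h3⟩
  exact ub hα hβ hγ hs h1 h2 h3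
end

section
/- For any algorithm multiplying matrices in the standard way with worker memory of m blocks, the communication-to-computation ratio (in blocks) is at least √(27/(8m)); formally, if during every window of m communication steps at most √(N_A N_B N_C) ≤ √((2m/3)³) block updates can be performed, then the ratio m/K of communications to computations satisfies m/K ≥ √(27/(8m)). -/
/-- If during every window of `m` communication steps at most
`K ≤ √(N_A N_B N_C) ≤ √((2m/3)³)` block updates can be performed, then the
communication-to-computation ratio `m/K` satisfies `m/K ≥ √(27/(8m))`. -/
theorem stmt_4 (m K : ℝ) (hm : 0 < m) (hK : 0 < K)
    (hbound : K ≤ Real.sqrt ((2 * m / 3) ^ 3)) :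
    m / K ≥ Real.sqrt (27 / (8 * m)) := by
  have hS : 0 < Real.sqrt ((2 * m / 3) ^ 3) := Real.sqrt_pos.mpr (by positivity)
  have key : Real.sqrt (27 / (8 * m)) = m / Real.sqrt ((2 * m / 3) ^ 3) := by
    rw [eq_div_iff hS.ne', ← Real.sqrt_mul (by positivity)]
    have : 27 / (8 * m) * (2 * m / 3) ^ 3 = m ^ 2 := by field_simp; ring
    rw [this, Real.sqrt_sq hm.le]
  rw [key]
  gcongr
end

section
/- The maximum re-use algorithm with parameter μ performs 2μ² + 2μt communications and μ²t block computations per outer iteration, so its communication-to-computation ratio equals 2/t + 2/μ, and as t → ∞ this ratio tends to 2/√m when μ = √m; moreover 2/√m = √(4/m) ≥ √(27/(8m)), i.e., the algorithm's asymptotic ratio exceeds the lower bound by a factor of exactly √(32/27). -/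
open Filter

/-- The maximum re-use algorithm with parameter `μ` performs `2μ² + 2μt`
communications and `μ²t` computations per outer iteration, so its ratio is `2/t + 2/μ`;
as `t → ∞` with `μ = √m` this tends to `2/√m`; moreover `2/√m = √(4/m) ≥ √(27/(8m))`,
exceeding the lower bound by the factor `√(32/27)` exactly. -/
theorem stmt_5 (m : ℝ) (hm : 0 < m) :
    (∀ μ t : ℝ, 0 < μ → 0 < t →
      (2 * μ ^ 2 + 2 * μ * t) / (μ ^ 2 * t) = 2 / t + 2 / μ) ∧
    Tendsto (fun t : ℝ => 2 / t + 2 / Real.sqrt m) atTop (nhds (2 / Real.sqrt m)) ∧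
    2 / Real.sqrt m = Real.sqrt (4 / m) ∧
    Real.sqrt (4 / m) ≥ Real.sqrt (27 / (8 * m)) ∧
    2 / Real.sqrt m = Real.sqrt (32 / 27) * Real.sqrt (27 / (8 * m)) := by
  have hsq : Real.sqrt (4 / m) = 2 / Real.sqrt m := by
    rw [Real.sqrt_div' 4 hm.le, show (4:ℝ) = 2^2 by norm_num, Real.sqrt_sq (by norm_num)]
  refine ⟨fun μ t hμ ht => by field_simp, ?_, hsq.symm, ?_, ?_⟩
  · simpa using (tendsto_const_nhds.div_atTop (tendsto_id (α := ℝ))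
      : Tendsto (fun t : ℝ => 2 / t) atTop (nhds 0)).add
      (tendsto_const_nhds (x := 2 / Real.sqrt m))
  · exact Real.sqrt_le_sqrt (by rw [div_le_div_iff₀ (by positivity) (by positivity)]; nlinarith)
  · rw [hsq.symm, ← Real.sqrt_mul (by norm_num)]
    congr 1
    field_simp
    ring
end
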